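/- Let α > 1 and β = α/(α−1). For any normed spaces (V₁,‖·‖₁), (V₂,‖·‖₂), any continuous strictly increasing G : [0,∞] → [0,1] with continuous strictly increasing inverse, and any nonzero p₁, p₂, the identity T_G(G(t/‖p₁‖₁^α), G(t/‖p₂‖₂^α)) = G(t/‖(p₁,p₂)‖_β^α) holds for all t > 0, where T_G(x,y) = G(( (G⁻¹(x))^{1/(1−α)} + (G⁻¹(y))^{1/(1−α)} )^{1−α}) and ‖(p₁,p₂)‖_β = (‖p₁‖₁^β + ‖p₂‖₂^β)^{1/β}. -/
import Mathlib


/-- The `T_G`-product of two `α`-simple PN spaces is `α`-simple for the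
`β`-norm, `β = α/(α-1)`:
`T_G (G (t/‖p₁‖₁^α)) (G (t/‖p₂‖₂^α)) = G (t/‖(p₁,p₂)‖_β^α)`. -/
theorem TG_product_alpha_simple
    (V₁ V₂ : Type*) [NormedAddCommGroup V₁] [NormedSpace ℝ V₁]
    [NormedAddCommGroup V₂] [NormedSpace ℝ V₂]
    (α : ℝ) (hα : 1 < α) (β : ℝ) (hβ : β = α / (α - 1))
    (G : ℝ → ℝ) (hGc : ContinuousOn G (Set.Ici 0))
    (hGm : StrictMonoOn G (Set.Ici 0))
    (Ginv : ℝ → ℝ) (hGinvc : ContinuousOn Ginv (G '' Set.Ici 0))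
    (hGinvm : StrictMonoOn Ginv (G '' Set.Ici 0))
    (hGinv : ∀ x ∈ Set.Ici (0:ℝ), Ginv (G x) = x)
    (p₁ : V₁) (hp₁ : p₁ ≠ 0) (p₂ : V₂) (hp₂ : p₂ ≠ 0)
    (t : ℝ) (ht : 0 < t) :
    G (((Ginv (G (t / ‖p₁‖ ^ α))) ^ (1 / (1 - α)) +
        (Ginv (G (t / ‖p₂‖ ^ α))) ^ (1 / (1 - α))) ^ (1 - α)) =
      G (t / ((‖p₁‖ ^ β + ‖p₂‖ ^ β) ^ (1 / β)) ^ α) := by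
  have ha : (0:ℝ) < ‖p₁‖ := norm_pos_iff.mpr hp₁
  have hb : (0:ℝ) < ‖p₂‖ := norm_pos_iff.mpr hp₂
  set a := ‖p₁‖ with ha'
  set b := ‖p₂‖ with hb'
  have h1 : (0:ℝ) < α - 1 := by linarith
  have h1' : (1:ℝ) - α ≠ 0 := by intro h; linarith
  have hβpos : (0:ℝ) < β := by rw [hβ]; positivity
  have hS : (0:ℝ) < a ^ β + b ^ β := by positivity
  have hta : Ginv (G (t / a ^ α)) = t / a ^ α :=
    hGinv _ (Set.mem_Ici.mpr (div_nonneg ht.le (Real.rpow_nonneg ha.le _)))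
  have htb : Ginv (G (t / b ^ α)) = t / b ^ α :=
    hGinv _ (Set.mem_Ici.mpr (div_nonneg ht.le (Real.rpow_nonneg hb.le _)))
  rw [hta, htb]
  congr 1
  have key : ∀ x : ℝ, 0 < x →
      (t / x ^ α) ^ (1 / (1 - α)) = t ^ (1 / (1 - α)) * x ^ β := by
    intro x hx
    rw [Real.div_rpow ht.le (Real.rpow_nonneg hx.le _), ← Real.rpow_mul hx.le]
    have : α * (1 / (1 - α)) = -β := by
      rw [hβ]; field_simp; ring
    rw [this, Real.rpow_neg hx.le, div_inv_eq_mul]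
  rw [key a ha, key b hb, ← mul_add, Real.mul_rpow (Real.rpow_nonneg ht.le _) hS.le,
    ← Real.rpow_mul ht.le, one_div_mul_cancel h1', Real.rpow_one,
    ← Real.rpow_mul hS.le]
  have hab : 1 / β * α = α - 1 := by
    rw [hβ]; field_simp
  rw [hab]
  have : (1:ℝ) - α = -(α - 1) := by ring
  rw [this, Real.rpow_neg hS.le, mul_comm, inv_mul_eq_div]
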